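/- For every integer m ≥ 2 and all α, β ∈ ℂ, the multiplication identity Σ_{k=0}^{m−1} h_0(α + ω^k · β) = m · h_0(α) · h_0(β) holds, where ω = exp(2πi/m). -/

import Mathlib

open Complex Finset

/-- `ω = exp(2πi/m)`, the primitive `m`-th root of unity. -/
noncomputable def om (m : ℕ) : ℂ := Complex.exp (2 * Real.pi * Complex.I / m)

/-- The `m`-th order hyperbolic function
`h_k(z) = (1/m) · Σ_{s=0}^{m−1} ω^{−k·s} · exp(ω^s · z)`. -/
noncomputable def hfun (m k : ℕ) (z : ℂ) : ℂ :=
  (1 / (m : ℂ)) * ∑ s ∈ Finset.range m, (om m) ^ (-((k * s : ℕ) : ℤ)) * Complex.exp ((om m) ^ s * z)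

lemma om_pow_self (m : ℕ) (hm : 2 ≤ m) : om m ^ m = 1 := by
  have hm0 : (m : ℂ) ≠ 0 := by
    exact_mod_cast Nat.cast_ne_zero.mpr (by omega)
  rw [om, ← Complex.exp_nat_mul]
  have : (m : ℂ) * (2 * Real.pi * Complex.I / m) = 2 * Real.pi * Complex.I := by
    field_simp
  rw [this, Complex.exp_two_pi_mul_I]

lemma shift_one (m : ℕ) (G : ℕ → ℂ) (hG : ∀ k, G (k + m) = G k) :
    ∑ k ∈ range m, G (k + 1) = ∑ k ∈ range m, G k := by
  have h1 : ∑ k ∈ range (m + 1), G k = (∑ k ∈ range m, G (k + 1)) + G 0 :=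
    Finset.sum_range_succ' G m
  have h2 : ∑ k ∈ range (m + 1), G k = (∑ k ∈ range m, G k) + G m :=
    Finset.sum_range_succ G m
  have h3 : G m = G 0 := by simpa using hG 0
  have h4 := h1.symm.trans h2
  rw [h3] at h4
  exact add_right_cancel h4

lemma shift_any (m : ℕ) (G : ℕ → ℂ) (hG : ∀ k, G (k + m) = G k) (s : ℕ) :
    ∑ k ∈ range m, G (s + k) = ∑ k ∈ range m, G k := by
  induction s with
  | zero => simp
  | succ n ih =>
    have : ∑ k ∈ range m, G (n + 1 + k) = ∑ k ∈ range m, (fun j => G (n + j)) (k + 1) := by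
      apply Finset.sum_congr rfl; intro k _; ring_nf
    rw [this, shift_one m (fun j => G (n + j)) (fun k => by
      simpa [← Nat.add_assoc] using hG (n + k))]
    exact ih

theorem hfun_mult_identity (m : ℕ) (hm : 2 ≤ m) (α β : ℂ) :
    ∑ k ∈ Finset.range m, hfun m 0 (α + (om m) ^ k * β) = (m : ℂ) * hfun m 0 α * hfun m 0 β := by
  have hm0 : (m : ℂ) ≠ 0 := Nat.cast_ne_zero.mpr (by omega)
  have hper : ∀ k, om m ^ (k + m) = om m ^ k := by
    intro k; rw [pow_add, om_pow_self m hm, mul_one]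
  simp only [hfun, Nat.zero_mul, Nat.cast_zero, neg_zero, zpow_zero, one_mul]
  -- LHS: ∑_k (1/m) ∑_s exp(ω^s (α + ω^k β))
  have key : ∀ s ∈ range m,
      ∑ k ∈ range m, Complex.exp (om m ^ s * (α + om m ^ k * β))
        = Complex.exp (om m ^ s * α) * ∑ t ∈ range m, Complex.exp (om m ^ t * β) := by
    intro s _
    have : ∀ k, Complex.exp (om m ^ s * (α + om m ^ k * β))
        = Complex.exp (om m ^ s * α) * Complex.exp (om m ^ (s + k) * β) := by
      intro k
      rw [← Complex.exp_add, pow_add]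
      ring_nf
    simp only [this, ← Finset.mul_sum]
    congr 1
    exact shift_any m (fun t => Complex.exp (om m ^ t * β))
      (fun k => by show Complex.exp (om m ^ (k + m) * β) = _; rw [hper]) s
  calc ∑ k ∈ range m, (1 / (m:ℂ)) * ∑ s ∈ range m,
        Complex.exp (om m ^ s * (α + om m ^ k * β))
      = (1/(m:ℂ)) * ∑ k ∈ range m, ∑ s ∈ range m,
          Complex.exp (om m ^ s * (α + om m ^ k * β)) := by
        rw [Finset.mul_sum]
    _ = (1/(m:ℂ)) * ∑ s ∈ range m, ∑ k ∈ range m,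
          Complex.exp (om m ^ s * (α + om m ^ k * β)) := by
        rw [Finset.sum_comm]
    _ = (1/(m:ℂ)) * ∑ s ∈ range m,
          Complex.exp (om m ^ s * α) * ∑ t ∈ range m, Complex.exp (om m ^ t * β) := by
        rw [Finset.sum_congr rfl key]
    _ = (m : ℂ) * ((1/(m:ℂ)) * ∑ s ∈ range m, Complex.exp (om m ^ s * α))
          * ((1/(m:ℂ)) * ∑ t ∈ range m, Complex.exp (om m ^ t * β)) := by
        rw [← Finset.sum_mul]
        field_simp
        simp only [mul_comm α, mul_comm β]
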